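/- A function u ∈ L^p(E,m) is U-invariant if and only if it is U*-invariant, and if and only if ∫ f u U*_α g dm = ∫ g u U_α f dm for all bounded positive measurable f, g ∈ L^{p'}(E,m) and all α > 0. -/

import Mathlib

open MeasureTheory ENNReal Filter Set

/-- A sub-Markovian resolvent of kernels on a measurable space `E`. -/
structure SubMarkovResolvent (E : Type*) [MeasurableSpace E] where
  /-- the kernel `U_α` for each `α > 0` -/
  kernel : ℝ → E → MeasureTheory.Measure E
  measurable_op : ∀ α : ℝ, 0 < α → ∀ f : E → ℝ≥0∞, Measurable f →
    Measurable (fun x => ∫⁻ y, f y ∂(kernel α x))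
  resolvent_eq : ∀ α β : ℝ, 0 < α → α ≤ β → ∀ f : E → ℝ≥0∞, Measurable f → ∀ x,
    ∫⁻ y, f y ∂(kernel α x)
      = (∫⁻ y, f y ∂(kernel β x))
        + ENNReal.ofReal (β - α) * ∫⁻ y, (∫⁻ z, f z ∂(kernel β y)) ∂(kernel α x)
  subMarkov : ∀ α : ℝ, 0 < α → ∀ x, ENNReal.ofReal α * kernel α x Set.univ ≤ 1

namespace SubMarkovResolvent

variable {E : Type*} [MeasurableSpace E]

/-- The action of `U_α` on positive measurable functions. -/
noncomputable def op (R : SubMarkovResolvent E) (α : ℝ) (f : E → ℝ≥0∞) (x : E) : ℝ≥0∞ :=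
  ∫⁻ y, f y ∂(R.kernel α x)

/-- The action of `U_α` on real-valued functions. -/
noncomputable def opR (R : SubMarkovResolvent E) (α : ℝ) (f : E → ℝ) (x : E) : ℝ :=
  ∫ y, f y ∂(R.kernel α x)

/-- The initial (potential) kernel `U = sup_{α > 0} U_α`. -/
noncomputable def pot (R : SubMarkovResolvent E) (f : E → ℝ≥0∞) (x : E) : ℝ≥0∞ :=
  ⨆ (α : ℝ) (_ : 0 < α), R.op α f x

/-- `m` is sub-invariant: `m ∘ (α U_α) ≤ m` for all `α > 0`. -/
def SubInvariant (R : SubMarkovResolvent E) (m : Measure E) : Prop :=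
  ∀ α : ℝ, 0 < α → ∀ f : E → ℝ≥0∞, Measurable f →
    ENNReal.ofReal α * ∫⁻ x, R.op α f x ∂m ≤ ∫⁻ x, f x ∂m

/-- `U` is `m`-transient. -/
def Transient (R : SubMarkovResolvent E) (m : Measure E) : Prop :=
  ∃ f : E → ℝ≥0∞, Measurable f ∧ (∫⁻ x, f x ∂m < ⊤) ∧
    (∀ᵐ x ∂m, 0 < f x) ∧ (∀ᵐ x ∂m, R.pot f x < ⊤)

/-- `U` is `m`-recurrent. -/
def Recurrent (R : SubMarkovResolvent E) (m : Measure E) : Prop :=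
  ∀ f : E → ℝ≥0∞, Measurable f → (∫⁻ x, f x ∂m < ⊤) →
    m {x | 0 < R.pot f x ∧ R.pot f x < ⊤} = 0

/-- `A` is `U`-absorbing with respect to `m`. -/
def Absorbing (R : SubMarkovResolvent E) (m : Measure E) (A : Set E) : Prop :=
  MeasurableSet A ∧ ∀ᵐ x ∂m, x ∈ A → R.pot (Set.indicator Aᶜ 1) x = 0

/-- `U` is `m`-irreducible. -/
def Irreducible (R : SubMarkovResolvent E) (m : Measure E) : Prop :=
  ∀ A : Set E, R.Absorbing m A → m A = 0 ∨ m Aᶜ = 0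

/-- `u` is `U`-excessive: supermedian and `α U_α u ↑ u` as `α → ∞`. -/
def Excessive (R : SubMarkovResolvent E) (u : E → ℝ≥0∞) : Prop :=
  Measurable u ∧ (∀ α : ℝ, 0 < α → ∀ x, ENNReal.ofReal α * R.op α u x ≤ u x) ∧
    (∀ x, (⨆ (α : ℝ) (_ : 0 < α), ENNReal.ofReal α * R.op α u x) = u x)

/-- The complete maximum principle for the initial kernel of `U`. -/
def CompleteMaxPrinciple (R : SubMarkovResolvent E) : Prop :=
  ∀ (f g : E → ℝ≥0∞) (c : ℝ≥0∞), Measurable f → Measurable g →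
    (∀ x, 0 < f x → R.pot f x ≤ R.pot g x + c) → ∀ x, R.pot f x ≤ R.pot g x + c

/-- `U` and `U*` are in weak duality with respect to `m`. -/
def InDuality (R S : SubMarkovResolvent E) (m : Measure E) : Prop :=
  ∀ α : ℝ, 0 < α → ∀ f g : E → ℝ≥0∞, Measurable f → Measurable g →
    ∫⁻ x, f x * R.op α g x ∂m = ∫⁻ x, g x * S.op α f x ∂m

/-- A real-valued function `v` is `U`-invariant with respect to `m`:
`U_α(v f) = v ⋅ U_α f` `m`-a.e. for all `α > 0` and bounded positive measurable `f`. -/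
def Invariant (R : SubMarkovResolvent E) (m : Measure E) (v : E → ℝ) : Prop :=
  ∀ α : ℝ, 0 < α → ∀ f : E → ℝ, Measurable f → (∀ x, 0 ≤ f x) → (∃ C : ℝ, ∀ x, f x ≤ C) →
    ∀ᵐ x ∂m, R.opR α (fun y => v y * f y) x = v x * R.opR α f x

end SubMarkovResolvent

/-- Conjugate exponents in `ℝ≥0∞` (as in the older Mathlib). -/
structure ENNReal.IsConjExponent (p q : ℝ≥0∞) : Prop where
  inv_add_inv_conj : p⁻¹ + q⁻¹ = 1

lemma ENNReal.IsConjExponent.symm {p q : ℝ≥0∞} (h : p.IsConjExponent q) : q.IsConjExponent p :=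
  ⟨by rw [add_comm]; exact h.inv_add_inv_conj⟩

lemma ENNReal.IsConjExponent.one_le {p q : ℝ≥0∞} (h : p.IsConjExponent q) : 1 ≤ p := by
  rw [← ENNReal.inv_le_one, ← h.inv_add_inv_conj]
  exact le_self_add

lemma ENNReal.IsConjExponent.ne_zero {p q : ℝ≥0∞} (h : p.IsConjExponent q) : p ≠ 0 :=
  (zero_lt_one.trans_le h.one_le).ne'

namespace SubMarkovResolvent

variable {E : Type*} [MeasurableSpace E]

-- ### auxiliary lemmas

lemma mass_le (R : SubMarkovResolvent E) {α : ℝ} (hα : 0 < α) (x : E) :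
    R.kernel α x Set.univ ≤ (ENNReal.ofReal α)⁻¹ := by
  rw [ENNReal.le_inv_iff_mul_le, mul_comm]
  exact R.subMarkov α hα x

lemma mass_lt_top (R : SubMarkovResolvent E) {α : ℝ} (hα : 0 < α) (x : E) :
    R.kernel α x Set.univ < ∞ :=
  (R.mass_le hα x).trans_lt (ENNReal.inv_lt_top.mpr (ENNReal.ofReal_pos.mpr hα))

lemma isFiniteMeasure_kernel (R : SubMarkovResolvent E) {α : ℝ} (hα : 0 < α) (x : E) :
    IsFiniteMeasure (R.kernel α x) := ⟨R.mass_lt_top hα x⟩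

lemma kernel_null (R : SubMarkovResolvent E) {m : Measure E} (hm : R.SubInvariant m)
    {α : ℝ} (hα : 0 < α) {N : Set E} (hN : m N = 0) :
    ∀ᵐ x ∂m, R.kernel α x N = 0 := by
  obtain ⟨N', hNN', hN'm, hN'0⟩ := exists_measurable_superset_of_null hN
  have hind : Measurable (N'.indicator (1 : E → ℝ≥0∞)) := measurable_one.indicator hN'm
  have h1 := hm α hα (N'.indicator 1) hind
  have h2 : ENNReal.ofReal α * ∫⁻ x, R.op α (N'.indicator 1) x ∂m = 0 := by
    refine le_antisymm (h1.trans_eq ?_) zero_le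
    rw [lintegral_indicator_one hN'm, hN'0]
  have hα0 : ENNReal.ofReal α ≠ 0 := (ENNReal.ofReal_pos.mpr hα).ne'
  have h3 : ∫⁻ x, R.op α (N'.indicator 1) x ∂m = 0 := by
    rcases mul_eq_zero.mp h2 with h | h
    · exact absurd h hα0
    · exact h
  have h4 := (lintegral_eq_zero_iff (R.measurable_op α hα _ hind)).mp h3
  filter_upwards [h4] with x hx
  have h5 : R.op α (N'.indicator 1) x = R.kernel α x N' := lintegral_indicator_one hN'm
  exact measure_mono_null hNN' (by rw [← h5]; exact hx)

lemma ae_kernel_of_ae (R : SubMarkovResolvent E) {m : Measure E} (hm : R.SubInvariant m)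
    {α : ℝ} (hα : 0 < α) {q : E → Prop} (h : ∀ᵐ y ∂m, q y) :
    ∀ᵐ x ∂m, ∀ᵐ y ∂(R.kernel α x), q y := by
  have h0 : m {y | ¬ q y} = 0 := h
  filter_upwards [R.kernel_null hm hα h0] with x hx
  exact hx

lemma opR_congr_ae (R : SubMarkovResolvent E) {m : Measure E} (hm : R.SubInvariant m)
    {α : ℝ} (hα : 0 < α) {v₁ v₂ : E → ℝ} (h : v₁ =ᵐ[m] v₂) :
    ∀ᵐ x ∂m, R.opR α v₁ x = R.opR α v₂ x := by
  filter_upwards [R.ae_kernel_of_ae hm hα h] with x hx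
  exact integral_congr_ae hx

lemma dual_inDuality (R S : SubMarkovResolvent E) {m : Measure E} (hD : R.InDuality S m) :
    S.InDuality R m :=
  fun α hα f g hf hg => (hD α hα g f hg hf).symm

lemma op_one (R : SubMarkovResolvent E) (α : ℝ) (x : E) :
    R.op α (fun _ => 1) x = R.kernel α x Set.univ := lintegral_one

lemma dual_subInvariant (R S : SubMarkovResolvent E) {m : Measure E} (hD : R.InDuality S m) :
    S.SubInvariant m := by
  intro α hα f hf
  have hd := hD α hα f (fun _ => 1) hf measurable_const
  have hmeas : Measurable fun x => f x * R.op α (fun _ => 1) x :=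
    hf.mul (R.measurable_op α hα _ measurable_const)
  have hS : ∫⁻ x, S.op α f x ∂m = ∫⁻ x, f x * R.op α (fun _ => 1) x ∂m := by
    rw [hd]; simp
  rw [hS, ← lintegral_const_mul _ hmeas]
  refine lintegral_mono fun x => ?_
  calc ENNReal.ofReal α * (f x * R.op α (fun _ => 1) x)
      = f x * (ENNReal.ofReal α * R.kernel α x Set.univ) := by
        rw [R.op_one]; ring
    _ ≤ f x * 1 := mul_le_mul_right (R.subMarkov α hα x) _
    _ = f x := mul_one _

lemma lintegral_op_le (R : SubMarkovResolvent E) {m : Measure E} (hm : R.SubInvariant m)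
    {α : ℝ} (hα : 0 < α) {f : E → ℝ≥0∞} (hf : Measurable f) :
    ∫⁻ x, R.op α f x ∂m ≤ (ENNReal.ofReal α)⁻¹ * ∫⁻ x, f x ∂m := by
  have hα0 : ENNReal.ofReal α ≠ 0 := (ENNReal.ofReal_pos.mpr hα).ne'
  calc ∫⁻ x, R.op α f x ∂m
      = (ENNReal.ofReal α)⁻¹ * (ENNReal.ofReal α * ∫⁻ x, R.op α f x ∂m) := by
        rw [← mul_assoc, ENNReal.inv_mul_cancel hα0 ENNReal.ofReal_ne_top, one_mul]
    _ ≤ _ := mul_le_mul_right (hm α hα f hf) _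

lemma opR_eq_toReal (R : SubMarkovResolvent E) {α : ℝ} {f : E → ℝ} (hf : Measurable f)
    (hf0 : ∀ y, 0 ≤ f y) (x : E) :
    R.opR α f x = (R.op α (fun y => ENNReal.ofReal (f y)) x).toReal :=
  integral_eq_lintegral_of_nonneg_ae (Filter.Eventually.of_forall hf0)
    hf.aestronglyMeasurable

lemma measurable_opR (R : SubMarkovResolvent E) {α : ℝ} (hα : 0 < α) {f : E → ℝ}
    (hf : Measurable f) (hf0 : ∀ y, 0 ≤ f y) :
    Measurable (fun x => R.opR α f x) := by
  have h : (fun x => R.opR α f x)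
      = fun x => (R.op α (fun y => ENNReal.ofReal (f y)) x).toReal :=
    funext fun x => R.opR_eq_toReal hf hf0 x
  rw [h]
  exact (R.measurable_op α hα _ (ENNReal.measurable_ofReal.comp hf)).ennreal_toReal

lemma op_le_mass (R : SubMarkovResolvent E) {α : ℝ} (hα : 0 < α) {f : E → ℝ≥0∞}
    {c : ℝ≥0∞} (hfc : ∀ y, f y ≤ c) (x : E) :
    R.op α f x ≤ c * (ENNReal.ofReal α)⁻¹ :=
  calc R.op α f x ≤ ∫⁻ _, c ∂(R.kernel α x) := lintegral_mono hfc
    _ = c * R.kernel α x Set.univ := lintegral_const c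
    _ ≤ _ := mul_le_mul_right (R.mass_le hα x) c

lemma opR_nonneg (R : SubMarkovResolvent E) {α : ℝ} {f : E → ℝ} (hf0 : ∀ y, 0 ≤ f y)
    (x : E) : 0 ≤ R.opR α f x := integral_nonneg hf0

lemma abs_opR_le (R : SubMarkovResolvent E) {α : ℝ} (hα : 0 < α) {f : E → ℝ}
    (hf : Measurable f) (hf0 : ∀ y, 0 ≤ f y) {C : ℝ} (hfC : ∀ y, f y ≤ C) (x : E) :
    |R.opR α f x| ≤ max C 0 * α⁻¹ := by
  rw [abs_of_nonneg (R.opR_nonneg hf0 x), R.opR_eq_toReal hf hf0]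
  have h1 : R.op α (fun y => ENNReal.ofReal (f y)) x
      ≤ ENNReal.ofReal (max C 0) * (ENNReal.ofReal α)⁻¹ :=
    R.op_le_mass hα (fun y => ENNReal.ofReal_le_ofReal ((hfC y).trans (le_max_left _ _))) x
  have hfin : ENNReal.ofReal (max C 0) * (ENNReal.ofReal α)⁻¹ ≠ ∞ :=
    ENNReal.mul_ne_top ENNReal.ofReal_ne_top
      (ENNReal.inv_ne_top.mpr (ENNReal.ofReal_pos.mpr hα).ne')
  calc (R.op α (fun y => ENNReal.ofReal (f y)) x).toReal
      ≤ (ENNReal.ofReal (max C 0) * (ENNReal.ofReal α)⁻¹).toReal :=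
        ENNReal.toReal_mono hfin h1
    _ = max C 0 * α⁻¹ := by
        rw [ENNReal.toReal_mul, ENNReal.toReal_inv, ENNReal.toReal_ofReal (le_max_right C 0),
          ENNReal.toReal_ofReal hα.le]


lemma op_rpow_le (R : SubMarkovResolvent E) {α : ℝ} (hα : 0 < α) {r r' : ℝ}
    (hrr' : r.HolderConjugate r') {f : E → ℝ≥0∞} (hf : Measurable f) (x : E) :
    R.op α f x ^ r ≤ ((ENNReal.ofReal α)⁻¹) ^ (r / r') * R.op α (fun y => f y ^ r) x := by
  have hH := ENNReal.lintegral_mul_le_Lp_mul_Lq (R.kernel α x) hrr' hf.aemeasurable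
    (aemeasurable_const (b := (1:ℝ≥0∞)))
  simp only [Pi.mul_apply, mul_one, ENNReal.one_rpow, lintegral_const, one_mul] at hH
  have h2 := ENNReal.rpow_le_rpow hH hrr'.nonneg
  rw [ENNReal.mul_rpow_of_nonneg _ _ hrr'.nonneg, ← ENNReal.rpow_mul, ← ENNReal.rpow_mul,
    one_div, inv_mul_cancel₀ hrr'.ne_zero, ENNReal.rpow_one, one_div,
    inv_mul_eq_div] at h2
  refine h2.trans ?_
  rw [mul_comm]
  exact mul_le_mul_left
    (ENNReal.rpow_le_rpow (R.mass_le hα x) (div_nonneg hrr'.nonneg hrr'.symm.nonneg)) _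

lemma pairing_fin (R : SubMarkovResolvent E) {m : Measure E} (hm : R.SubInvariant m)
    {p p' : ℝ≥0∞} (hpp' : p.IsConjExponent p')
    {w : E → ℝ} (hw : Measurable w) (hwp : eLpNorm w p m < ∞)
    {g : E → ℝ} (hg : Measurable g) (hg0 : ∀ x, 0 ≤ g x) {Cg : ℝ} (hgC : ∀ x, g x ≤ Cg)
    (hgp' : eLpNorm g p' m < ∞) {α : ℝ} (hα : 0 < α) :
    (∀ᵐ x ∂m, R.op α (fun y => (‖w y‖₊ : ℝ≥0∞)) x < ∞) ∧
      (∫⁻ x, ENNReal.ofReal (g x) * R.op α (fun y => (‖w y‖₊ : ℝ≥0∞)) x ∂m) < ∞ := by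
  set W : E → ℝ≥0∞ := fun y => (‖w y‖₊ : ℝ≥0∞) with hW
  have hWmeas : Measurable W := hw.nnnorm.coe_nnreal_ennreal
  have hαinv : (ENNReal.ofReal α)⁻¹ ≠ ∞ :=
    ENNReal.inv_ne_top.mpr (ENNReal.ofReal_pos.mpr hα).ne'
  have hgW : ∀ x, ENNReal.ofReal (g x) = (‖g x‖₊ : ℝ≥0∞) :=
    fun x => (Real.enorm_eq_ofReal (hg0 x)).symm
  by_cases hptop : p = ∞
  · -- p = ∞, p' = 1
    have hp'1 : p' = 1 := by
      have h := hpp'.inv_add_inv_conj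
      rw [hptop] at h
      simp only [ENNReal.inv_top, zero_add] at h
      exact ENNReal.inv_eq_one.mp h
    have hC : eLpNormEssSup w m < ∞ := by
      rw [hptop, eLpNorm_exponent_top] at hwp; exact hwp
    have hae : ∀ᵐ y ∂m, W y ≤ eLpNormEssSup w m := ae_le_eLpNormEssSup
    have hbd : ∀ᵐ x ∂m, R.op α W x ≤ eLpNormEssSup w m * (ENNReal.ofReal α)⁻¹ := by
      filter_upwards [R.ae_kernel_of_ae hm hα hae] with x hx
      calc R.op α W x ≤ ∫⁻ _, eLpNormEssSup w m ∂(R.kernel α x) := lintegral_mono_ae hx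
        _ = eLpNormEssSup w m * R.kernel α x Set.univ := lintegral_const _
        _ ≤ _ := mul_le_mul_right (R.mass_le hα x) _
    have hfin : eLpNormEssSup w m * (ENNReal.ofReal α)⁻¹ < ∞ :=
      ENNReal.mul_lt_top hC (lt_top_iff_ne_top.mpr hαinv)
    constructor
    · filter_upwards [hbd] with x hx; exact hx.trans_lt hfin
    · have hint : ∫⁻ x, ENNReal.ofReal (g x) * R.op α W x ∂m
          ≤ (eLpNormEssSup w m * (ENNReal.ofReal α)⁻¹) * ∫⁻ x, ENNReal.ofReal (g x) ∂m := by
        rw [← lintegral_const_mul _ (hg.ennreal_ofReal)]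
        refine lintegral_mono_ae ?_
        filter_upwards [hbd] with x hx
        calc ENNReal.ofReal (g x) * R.op α W x
            ≤ ENNReal.ofReal (g x) * (eLpNormEssSup w m * (ENNReal.ofReal α)⁻¹) :=
              mul_le_mul_right hx _
          _ = _ := mul_comm _ _
      refine hint.trans_lt (ENNReal.mul_lt_top hfin ?_)
      have : ∫⁻ x, ENNReal.ofReal (g x) ∂m = eLpNorm g 1 m := by
        rw [eLpNorm_one_eq_lintegral_enorm]
        exact lintegral_congr fun x => hgW x
      rw [this, ← hp'1]; exact hgp'
  · by_cases hp1 : p = 1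
    · -- p = 1
      have h1 : ∫⁻ x, R.op α W x ∂m < ∞ := by
        have := R.lintegral_op_le hm hα hWmeas
        refine this.trans_lt (ENNReal.mul_lt_top (lt_top_iff_ne_top.mpr hαinv) ?_)
        have : ∫⁻ y, W y ∂m = eLpNorm w 1 m := by rw [eLpNorm_one_eq_lintegral_enorm]; rfl
        rw [this, ← hp1]; exact hwp
      constructor
      · exact ae_lt_top (R.measurable_op α hα _ hWmeas) h1.ne
      · have hbd : ∀ x, ENNReal.ofReal (g x) * R.op α W x
            ≤ ENNReal.ofReal (max Cg 0) * R.op α W x := fun x =>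
          mul_le_mul_left (ENNReal.ofReal_le_ofReal ((hgC x).trans (le_max_left _ _))) _
        calc ∫⁻ x, ENNReal.ofReal (g x) * R.op α W x ∂m
            ≤ ∫⁻ x, ENNReal.ofReal (max Cg 0) * R.op α W x ∂m := lintegral_mono hbd
          _ = ENNReal.ofReal (max Cg 0) * ∫⁻ x, R.op α W x ∂m :=
              lintegral_const_mul _ (R.measurable_op α hα _ hWmeas)
          _ < ∞ := ENNReal.mul_lt_top ENNReal.ofReal_lt_top h1
    · -- 1 < p < ∞
      have hp1' : 1 < p := lt_of_le_of_ne hpp'.one_le (Ne.symm hp1)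
      have hp0 : p ≠ 0 := hpp'.ne_zero
      have hp'0 : p' ≠ 0 := hpp'.symm.ne_zero
      have hp'top : p' ≠ ∞ := by
        intro h
        apply hp1
        have h2 := hpp'.inv_add_inv_conj
        rw [h] at h2
        simp only [ENNReal.inv_top, add_zero] at h2
        exact ENNReal.inv_eq_one.mp h2
      set r := p.toReal with hr
      set r' := p'.toReal with hr'
      have hr1 : 1 < r := by
        rw [hr, ← ENNReal.toReal_one]
        exact (ENNReal.toReal_lt_toReal (by simp) hptop).mpr hp1'
      have hconj : r.HolderConjugate r' := by
        refine Real.holderConjugate_iff.mpr ⟨hr1, ?_⟩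
        rw [hr, hr', ← ENNReal.toReal_inv, ← ENNReal.toReal_inv,
          ← ENNReal.toReal_add (by simpa using hp0) (by simpa using hp'0),
          hpp'.inv_add_inv_conj, ENNReal.toReal_one]
      have hWr : ∫⁻ y, W y ^ r ∂m < ∞ :=
        (eLpNorm_lt_top_iff_lintegral_rpow_enorm_lt_top hp0 hptop).mp hwp
      have hOpr : ∫⁻ x, R.op α W x ^ r ∂m < ∞ := by
        have hc : ((ENNReal.ofReal α)⁻¹) ^ (r / r') ≠ ∞ :=
          ENNReal.rpow_ne_top_of_nonneg (div_nonneg hconj.nonneg hconj.symm.nonneg) hαinv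
        calc ∫⁻ x, R.op α W x ^ r ∂m
            ≤ ∫⁻ x, ((ENNReal.ofReal α)⁻¹) ^ (r / r') * R.op α (fun y => W y ^ r) x ∂m :=
              lintegral_mono fun x => R.op_rpow_le hα hconj hWmeas x
          _ = ((ENNReal.ofReal α)⁻¹) ^ (r / r') * ∫⁻ x, R.op α (fun y => W y ^ r) x ∂m :=
              lintegral_const_mul _ (R.measurable_op α hα _ (hWmeas.pow_const r))
          _ ≤ ((ENNReal.ofReal α)⁻¹) ^ (r / r')
              * ((ENNReal.ofReal α)⁻¹ * ∫⁻ y, W y ^ r ∂m) :=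
              mul_le_mul_right (R.lintegral_op_le hm hα (hWmeas.pow_const r)) _
          _ < ∞ := ENNReal.mul_lt_top (lt_top_iff_ne_top.mpr hc)
              (ENNReal.mul_lt_top (lt_top_iff_ne_top.mpr hαinv) hWr)
      constructor
      · have h := ae_lt_top ((R.measurable_op α hα _ hWmeas).pow_const r) hOpr.ne
        filter_upwards [h] with x hx
        exact (ENNReal.rpow_lt_top_iff_of_pos (lt_trans zero_lt_one hr1)).mp hx
      · have hH := ENNReal.lintegral_mul_le_Lp_mul_Lq m hconj.symm
          (ENNReal.measurable_ofReal.comp hg).aemeasurable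
          (R.measurable_op α hα _ hWmeas).aemeasurable
        simp only [Pi.mul_apply] at hH
        refine hH.trans_lt (ENNReal.mul_lt_top ?_ ?_)
        · have hgr : ∫⁻ x, ENNReal.ofReal (g x) ^ r' ∂m < ∞ := by
            have := (eLpNorm_lt_top_iff_lintegral_rpow_enorm_lt_top hp'0 hp'top).mp hgp'
            refine lt_of_eq_of_lt ?_ this
            exact lintegral_congr fun x => by rw [hgW x]; rfl
          exact ENNReal.rpow_lt_top_of_nonneg (by positivity) hgr.ne
        · exact ENNReal.rpow_lt_top_of_nonneg (by positivity) hOpr.ne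


lemma pairing (R S : SubMarkovResolvent E) {m : Measure E} (hm : R.SubInvariant m)
    (hD : R.InDuality S m) {p p' : ℝ≥0∞} (hpp' : p.IsConjExponent p')
    {w : E → ℝ} (hw : Measurable w) (hwp : eLpNorm w p m < ∞)
    {f : E → ℝ} (hf : Measurable f) (hf0 : ∀ x, 0 ≤ f x) {Cf : ℝ} (hfC : ∀ x, f x ≤ Cf)
    {g : E → ℝ} (hg : Measurable g) (hg0 : ∀ x, 0 ≤ g x) {Cg : ℝ} (hgC : ∀ x, g x ≤ Cg)
    (hgp' : eLpNorm g p' m < ∞) {α : ℝ} (hα : 0 < α) :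
    Integrable (fun x => g x * R.opR α (fun y => w y * f y) x) m ∧
      ∫ x, g x * R.opR α (fun y => w y * f y) x ∂m
        = ∫ x, (w x * f x) * S.opR α g x ∂m := by
  obtain ⟨hWfin, hpair⟩ := R.pairing_fin hm hpp' hw hwp hg hg0 hgC hgp' hα
  set W : E → ℝ≥0∞ := fun y => (‖w y‖₊ : ℝ≥0∞) with hWdef
  have hWmeas : Measurable W := hw.nnnorm.coe_nnreal_ennreal
  set C : ℝ≥0∞ := ENNReal.ofReal (max Cf 0) with hCdef
  set wp : E → ℝ := fun y => max (w y) 0 with hwpdef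
  set wm : E → ℝ := fun y => max (-w y) 0 with hwmdef
  have hwpmeas : Measurable wp := hw.max measurable_const
  have hwmmeas : Measurable wm := hw.neg.max measurable_const
  have hwp0 : ∀ y, 0 ≤ wp y := fun y => le_max_right _ _
  have hwm0 : ∀ y, 0 ≤ wm y := fun y => le_max_right _ _
  have hwpabs : ∀ y, wp y ≤ |w y| := fun y => max_le (le_abs_self _) (abs_nonneg _)
  have hwmabs : ∀ y, wm y ≤ |w y| := fun y => max_le (neg_le_abs _) (abs_nonneg _)
  have hfC' : ∀ y, f y ≤ max Cf 0 := fun y => (hfC y).trans (le_max_left _ _)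
  have hWof : ∀ y, W y = ENNReal.ofReal |w y| := fun y => Real.enorm_eq_ofReal_abs _
  set hp : E → ℝ≥0∞ := fun y => ENNReal.ofReal (wp y * f y) with hhpdef
  set hn : E → ℝ≥0∞ := fun y => ENNReal.ofReal (wm y * f y) with hhndef
  have hhpmeas : Measurable hp := (hwpmeas.mul hf).ennreal_ofReal
  have hhnmeas : Measurable hn := (hwmmeas.mul hf).ennreal_ofReal
  have hbp : ∀ y, hp y ≤ C * W y := by
    intro y
    rw [hWof y, ← ENNReal.ofReal_mul (le_max_right Cf 0)]
    exact ENNReal.ofReal_le_ofReal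
      (by rw [mul_comm (max Cf 0) _];
          exact mul_le_mul (hwpabs y) (hfC' y) (hf0 y) (abs_nonneg _))
  have hbn : ∀ y, hn y ≤ C * W y := by
    intro y
    rw [hWof y, ← ENNReal.ofReal_mul (le_max_right Cf 0)]
    exact ENNReal.ofReal_le_ofReal
      (by rw [mul_comm (max Cf 0) _];
          exact mul_le_mul (hwmabs y) (hfC' y) (hf0 y) (abs_nonneg _))
  have hbwf : ∀ y, (‖w y * f y‖₊ : ℝ≥0∞) ≤ C * W y := by
    intro y
    rw [hWof y, ← ENNReal.ofReal_mul (le_max_right Cf 0), ← enorm_eq_nnnorm, Real.enorm_eq_ofReal_abs]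
    refine ENNReal.ofReal_le_ofReal ?_
    rw [abs_mul, abs_of_nonneg (hf0 y), mul_comm (max Cf 0) _]
    exact mul_le_mul le_rfl (hfC' y) (hf0 y) (abs_nonneg _)
  -- pointwise bounds for the kernel integrals
  have hkp : ∀ x, R.op α hp x ≤ C * R.op α W x := fun x =>
    (lintegral_mono hbp).trans (le_of_eq (lintegral_const_mul C hWmeas))
  have hkn : ∀ x, R.op α hn x ≤ C * R.op α W x := fun x =>
    (lintegral_mono hbn).trans (le_of_eq (lintegral_const_mul C hWmeas))
  -- the key a.e. decomposition of opR (w * f)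
  have key : ∀ᵐ x ∂m, R.op α hp x ≠ ∞ ∧ R.op α hn x ≠ ∞ ∧
      R.opR α (fun y => w y * f y) x = (R.op α hp x).toReal - (R.op α hn x).toReal := by
    filter_upwards [hWfin] with x hx
    have hCW : C * R.op α W x < ∞ := ENNReal.mul_lt_top ENNReal.ofReal_lt_top hx
    have finp : R.op α hp x ≠ ∞ := ((hkp x).trans_lt hCW).ne
    have finn : R.op α hn x ≠ ∞ := ((hkn x).trans_lt hCW).ne
    refine ⟨finp, finn, ?_⟩
    have hintwf : Integrable (fun y => w y * f y) (R.kernel α x) := by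
      refine ⟨(hw.mul hf).aestronglyMeasurable, ?_⟩
      show (∫⁻ y, (‖w y * f y‖₊ : ℝ≥0∞) ∂(R.kernel α x)) < ⊤
      calc ∫⁻ y, (‖w y * f y‖₊ : ℝ≥0∞) ∂(R.kernel α x)
          ≤ ∫⁻ y, C * W y ∂(R.kernel α x) := lintegral_mono hbwf
        _ = C * R.op α W x := lintegral_const_mul C hWmeas
        _ < ⊤ := hCW
    have hintp : Integrable (fun y => wp y * f y) (R.kernel α x) := by
      refine hintwf.mono (hwpmeas.mul hf).aestronglyMeasurable
        (Filter.Eventually.of_forall fun y => ?_)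
      rw [Real.norm_eq_abs, Real.norm_eq_abs, abs_of_nonneg (mul_nonneg (hwp0 y) (hf0 y)),
        abs_mul, abs_of_nonneg (hf0 y)]
      exact mul_le_mul_of_nonneg_right (hwpabs y) (hf0 y)
    have hintn : Integrable (fun y => wm y * f y) (R.kernel α x) := by
      refine hintwf.mono (hwmmeas.mul hf).aestronglyMeasurable
        (Filter.Eventually.of_forall fun y => ?_)
      rw [Real.norm_eq_abs, Real.norm_eq_abs, abs_of_nonneg (mul_nonneg (hwm0 y) (hf0 y)),
        abs_mul, abs_of_nonneg (hf0 y)]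
      exact mul_le_mul_of_nonneg_right (hwmabs y) (hf0 y)
    have hsub : R.opR α (fun y => w y * f y) x
        = ∫ y, wp y * f y ∂(R.kernel α x) - ∫ y, wm y * f y ∂(R.kernel α x) := by
      rw [← integral_sub hintp hintn]
      refine integral_congr_ae (Filter.Eventually.of_forall fun y => ?_)
      show w y * f y = wp y * f y - wm y * f y
      rw [← sub_mul, max_zero_sub_max_neg_zero_eq_self]
    rw [hsub]
    have e1 : ∫ y, wp y * f y ∂(R.kernel α x) = (R.op α hp x).toReal :=
      integral_eq_lintegral_of_nonneg_ae
        (Filter.Eventually.of_forall fun y => mul_nonneg (hwp0 y) (hf0 y))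
        (hwpmeas.mul hf).aestronglyMeasurable
    have e2 : ∫ y, wm y * f y ∂(R.kernel α x) = (R.op α hn x).toReal :=
      integral_eq_lintegral_of_nonneg_ae
        (Filter.Eventually.of_forall fun y => mul_nonneg (hwm0 y) (hf0 y))
        (hwmmeas.mul hf).aestronglyMeasurable
    rw [e1, e2]
  -- the S-side kernel integral of g
  set T : E → ℝ≥0∞ := fun x => S.op α (fun y => ENNReal.ofReal (g y)) x with hTdef
  have hTle : ∀ x, T x ≤ ENNReal.ofReal (max Cg 0) * (ENNReal.ofReal α)⁻¹ := fun x =>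
    S.op_le_mass hα (fun y => ENNReal.ofReal_le_ofReal ((hgC y).trans (le_max_left _ _))) x
  have hTfin : ∀ x, T x ≠ ∞ := fun x =>
    ((hTle x).trans_lt (ENNReal.mul_lt_top ENNReal.ofReal_lt_top
      (lt_top_iff_ne_top.mpr (ENNReal.inv_ne_top.mpr (ENNReal.ofReal_pos.mpr hα).ne')))).ne
  have hSopR : ∀ x, S.opR α g x = (T x).toReal := fun x => S.opR_eq_toReal hg hg0 x
  have hgemeas : Measurable fun x => ENNReal.ofReal (g x) := hg.ennreal_ofReal
  have hopWmeas : Measurable fun x => R.op α W x := R.measurable_op α hα _ hWmeas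
  -- integrability and identification of the G side
  have hGint : ∀ (h' : E → ℝ≥0∞), Measurable h' → (∀ x, R.op α h' x ≤ C * R.op α W x) →
      (∫⁻ x, ENNReal.ofReal (g x) * R.op α h' x ∂m) < ∞ ∧
      Integrable (fun x => g x * (R.op α h' x).toReal) m ∧
      ∫ x, g x * (R.op α h' x).toReal ∂m
        = (∫⁻ x, ENNReal.ofReal (g x) * R.op α h' x ∂m).toReal := by
    intro h' hh'meas hh'le
    have hmeas : Measurable fun x => g x * (R.op α h' x).toReal :=
      hg.mul (R.measurable_op α hα _ hh'meas).ennreal_toReal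
    have hnn : ∀ x, 0 ≤ g x * (R.op α h' x).toReal := fun x =>
      mul_nonneg (hg0 x) ENNReal.toReal_nonneg
    have hof : ∀ x, ENNReal.ofReal (g x * (R.op α h' x).toReal)
        ≤ ENNReal.ofReal (g x) * R.op α h' x := fun x => by
      rw [ENNReal.ofReal_mul (hg0 x)]
      exact mul_le_mul_right ENNReal.ofReal_toReal_le _
    have hbound : ∫⁻ x, ENNReal.ofReal (g x) * R.op α h' x ∂m < ∞ := by
      calc ∫⁻ x, ENNReal.ofReal (g x) * R.op α h' x ∂m
          ≤ ∫⁻ x, C * (ENNReal.ofReal (g x) * R.op α W x) ∂m := by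
            refine lintegral_mono fun x => ?_
            calc ENNReal.ofReal (g x) * R.op α h' x
                ≤ ENNReal.ofReal (g x) * (C * R.op α W x) := mul_le_mul_right (hh'le x) _
              _ = C * (ENNReal.ofReal (g x) * R.op α W x) := by ring
        _ = C * ∫⁻ x, ENNReal.ofReal (g x) * R.op α W x ∂m :=
            lintegral_const_mul C (hgemeas.mul hopWmeas)
        _ < ∞ := ENNReal.mul_lt_top ENNReal.ofReal_lt_top hpair
    have hint : Integrable (fun x => g x * (R.op α h' x).toReal) m := by
      refine ⟨hmeas.aestronglyMeasurable, ?_⟩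
      show (∫⁻ x, (‖g x * (R.op α h' x).toReal‖₊ : ℝ≥0∞) ∂m) < ⊤
      refine lt_of_le_of_lt (lintegral_mono fun x => ?_) hbound
      rw [← enorm_eq_nnnorm, Real.enorm_eq_ofReal (hnn x)]
      exact hof x
    refine ⟨hbound, hint, ?_⟩
    rw [integral_eq_lintegral_of_nonneg_ae (Filter.Eventually.of_forall hnn)
      hmeas.aestronglyMeasurable]
    congr 1
    refine lintegral_congr_ae ?_
    filter_upwards [hWfin] with x hx
    have hfin : R.op α h' x ≠ ∞ :=
      ((hh'le x).trans_lt (ENNReal.mul_lt_top ENNReal.ofReal_lt_top hx)).ne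
    rw [ENNReal.ofReal_mul (hg0 x), ENNReal.ofReal_toReal hfin]
  obtain ⟨hXp, hGpint, hGpeq⟩ := hGint hp hhpmeas hkp
  obtain ⟨hXn, hGnint, hGneq⟩ := hGint hn hhnmeas hkn
  -- duality
  have hdualp : ∫⁻ x, ENNReal.ofReal (g x) * R.op α hp x ∂m = ∫⁻ x, hp x * T x ∂m :=
    hD α hα (fun x => ENNReal.ofReal (g x)) hp hgemeas hhpmeas
  have hdualn : ∫⁻ x, ENNReal.ofReal (g x) * R.op α hn x ∂m = ∫⁻ x, hn x * T x ∂m :=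
    hD α hα (fun x => ENNReal.ofReal (g x)) hn hgemeas hhnmeas
  -- the H side
  have hTmeas : Measurable T := S.measurable_op α hα _ hgemeas
  set Hp : E → ℝ := fun x => wp x * f x * (T x).toReal with hHpdef
  set Hn : E → ℝ := fun x => wm x * f x * (T x).toReal with hHndef
  have hHpmeas : Measurable Hp := (hwpmeas.mul hf).mul hTmeas.ennreal_toReal
  have hHnmeas : Measurable Hn := (hwmmeas.mul hf).mul hTmeas.ennreal_toReal
  have hHpnn : ∀ x, 0 ≤ Hp x := fun x =>
    mul_nonneg (mul_nonneg (hwp0 x) (hf0 x)) ENNReal.toReal_nonneg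
  have hHnnn : ∀ x, 0 ≤ Hn x := fun x =>
    mul_nonneg (mul_nonneg (hwm0 x) (hf0 x)) ENNReal.toReal_nonneg
  have hHofp : ∀ x, ENNReal.ofReal (Hp x) = hp x * T x := fun x => by
    rw [hHpdef]
    show ENNReal.ofReal (wp x * f x * (T x).toReal) = _
    rw [ENNReal.ofReal_mul (mul_nonneg (hwp0 x) (hf0 x)), ENNReal.ofReal_toReal (hTfin x)]
  have hHofn : ∀ x, ENNReal.ofReal (Hn x) = hn x * T x := fun x => by
    rw [hHndef]
    show ENNReal.ofReal (wm x * f x * (T x).toReal) = _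
    rw [ENNReal.ofReal_mul (mul_nonneg (hwm0 x) (hf0 x)), ENNReal.ofReal_toReal (hTfin x)]
  have hHpint : Integrable Hp m := by
    refine ⟨hHpmeas.aestronglyMeasurable, ?_⟩
    show (∫⁻ x, (‖Hp x‖₊ : ℝ≥0∞) ∂m) < ⊤
    have he : ∀ x, (‖Hp x‖₊ : ℝ≥0∞) = hp x * T x := fun x => by
      rw [← enorm_eq_nnnorm, Real.enorm_eq_ofReal (hHpnn x), hHofp x]
    rw [lintegral_congr he, ← hdualp]
    exact hXp
  have hHnint : Integrable Hn m := by
    refine ⟨hHnmeas.aestronglyMeasurable, ?_⟩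
    show (∫⁻ x, (‖Hn x‖₊ : ℝ≥0∞) ∂m) < ⊤
    have he : ∀ x, (‖Hn x‖₊ : ℝ≥0∞) = hn x * T x := fun x => by
      rw [← enorm_eq_nnnorm, Real.enorm_eq_ofReal (hHnnn x), hHofn x]
    rw [lintegral_congr he, ← hdualn]
    exact hXn
  have hHpeq : ∫ x, Hp x ∂m = (∫⁻ x, ENNReal.ofReal (g x) * R.op α hp x ∂m).toReal := by
    rw [integral_eq_lintegral_of_nonneg_ae (Filter.Eventually.of_forall hHpnn)
      hHpmeas.aestronglyMeasurable, lintegral_congr hHofp, ← hdualp]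
  have hHneq : ∫ x, Hn x ∂m = (∫⁻ x, ENNReal.ofReal (g x) * R.op α hn x ∂m).toReal := by
    rw [integral_eq_lintegral_of_nonneg_ae (Filter.Eventually.of_forall hHnnn)
      hHnmeas.aestronglyMeasurable, lintegral_congr hHofn, ← hdualn]
  have hRHS : ∫ x, (w x * f x) * S.opR α g x ∂m = ∫ x, Hp x ∂m - ∫ x, Hn x ∂m := by
    rw [← integral_sub hHpint hHnint]
    refine integral_congr_ae (Filter.Eventually.of_forall fun x => ?_)
    show (w x * f x) * S.opR α g x
      = wp x * f x * (T x).toReal - wm x * f x * (T x).toReal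
    rw [hSopR x, ← sub_mul, ← sub_mul, max_zero_sub_max_neg_zero_eq_self]
  have hLHS : ∫ x, g x * R.opR α (fun y => w y * f y) x ∂m
      = ∫ x, g x * (R.op α hp x).toReal ∂m - ∫ x, g x * (R.op α hn x).toReal ∂m := by
    rw [← integral_sub hGpint hGnint]
    refine integral_congr_ae ?_
    filter_upwards [key] with x hx
    rw [hx.2.2]
    ring
  constructor
  · refine (hGpint.sub hGnint).congr ?_
    filter_upwards [key] with x hx
    show g x * (R.op α hp x).toReal - g x * (R.op α hn x).toReal = _
    rw [hx.2.2]
    ring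
  · rw [hLHS, hRHS, hGpeq, hGneq, hHpeq, hHneq]

lemma master (R S : SubMarkovResolvent E) (m : Measure E) [SigmaFinite m]
    (hmR : R.SubInvariant m) (hD : R.InDuality S m)
    {p p' : ℝ≥0∞} (hpp' : p.IsConjExponent p')
    {u : E → ℝ} (hu : MemLp u p m) :
    R.Invariant m u ↔ (∀ α : ℝ, 0 < α → ∀ f g : E → ℝ, Measurable f → Measurable g →
        (∀ x, 0 ≤ f x) → (∀ x, 0 ≤ g x) → (∃ C : ℝ, ∀ x, f x ≤ C) → (∃ C : ℝ, ∀ x, g x ≤ C) →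
        MemLp f p' m → MemLp g p' m →
        ∫ x, f x * u x * S.opR α g x ∂m = ∫ x, g x * u x * R.opR α f x ∂m) := by
  have hwmeas : Measurable (hu.1.mk u) := hu.1.stronglyMeasurable_mk.measurable
  set w : E → ℝ := hu.1.mk u with hwdef
  have hwae : u =ᵐ[m] w := hu.1.ae_eq_mk
  have hwp : eLpNorm w p m < ∞ := by
    rw [← eLpNorm_congr_ae hwae]; exact hu.2
  constructor
  · -- invariance implies the duality identity
    rintro hInv α hα f g hf hg hf0 hg0 ⟨Cf, hfC⟩ ⟨Cg, hgC⟩ hfp hgp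
    obtain ⟨_, hPeq⟩ := R.pairing S hmR hD hpp' hwmeas hwp hf hf0 hfC hg hg0 hgC hgp.2 hα
    have hinv1 : ∀ᵐ x ∂m, R.opR α (fun y => w y * f y) x = R.opR α (fun y => u y * f y) x :=
      R.opR_congr_ae hmR hα (by filter_upwards [hwae] with y hy; rw [hy])
    have hinv2 := hInv α hα f hf hf0 ⟨Cf, hfC⟩
    calc ∫ x, f x * u x * S.opR α g x ∂m
        = ∫ x, (w x * f x) * S.opR α g x ∂m := by
          refine integral_congr_ae ?_
          filter_upwards [hwae] with x hx
          rw [hx]; ring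
      _ = ∫ x, g x * R.opR α (fun y => w y * f y) x ∂m := hPeq.symm
      _ = ∫ x, g x * u x * R.opR α f x ∂m := by
          refine integral_congr_ae ?_
          filter_upwards [hinv1, hinv2, hwae] with x h1 h2 h3
          rw [h1, h2]; ring
  · -- the duality identity implies invariance
    rintro hInt α hα f hf hf0 ⟨Cf, hfC⟩
    have htrans : ∀ᵐ x ∂m, R.opR α (fun y => u y * f y) x = R.opR α (fun y => w y * f y) x :=
      R.opR_congr_ae hmR hα (by filter_upwards [hwae] with y hy; rw [hy])
    suffices h : ∀ᵐ x ∂m, R.opR α (fun y => w y * f y) x = w x * R.opR α f x by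
      filter_upwards [h, htrans, hwae] with x h1 h2 h3
      rw [h2, h1, h3]
    set fn : ℕ → E → ℝ := fun n => (spanningSets m n).indicator f with hfndef
    have hfnmeas : ∀ n, Measurable (fn n) := fun n =>
      hf.indicator (measurableSet_spanningSets m n)
    have hfn0 : ∀ n x, 0 ≤ fn n x := fun n x =>
      Set.indicator_nonneg (fun y _ => hf0 y) x
    have hfnC : ∀ n x, fn n x ≤ max Cf 0 := by
      intro n x
      by_cases hx : x ∈ spanningSets m n
      · rw [hfndef]; show (spanningSets m n).indicator f x ≤ _
        rw [Set.indicator_of_mem hx]; exact (hfC x).trans (le_max_left _ _)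
      · rw [hfndef]; show (spanningSets m n).indicator f x ≤ _
        rw [Set.indicator_of_notMem hx]; exact le_max_right _ _
    have hfnLp : ∀ n, MemLp (fn n) p' m := by
      intro n
      refine MemLp.of_le (memLp_indicator_const p' (measurableSet_spanningSets m n) (max Cf 0)
        (Or.inr (measure_spanningSets_lt_top m n).ne)) (hfnmeas n).aestronglyMeasurable ?_
      refine Filter.Eventually.of_forall fun x => ?_
      show ‖(spanningSets m n).indicator f x‖ ≤ ‖(spanningSets m n).indicator (fun _ => max Cf 0) x‖
      by_cases hx : x ∈ spanningSets m n
      · rw [Set.indicator_of_mem hx, Set.indicator_of_mem hx, Real.norm_eq_abs, Real.norm_eq_abs,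
          abs_of_nonneg (hf0 x), abs_of_nonneg (le_max_right Cf 0)]
        exact (hfC x).trans (le_max_left _ _)
      · rw [Set.indicator_of_notMem hx, Set.indicator_of_notMem hx]
    have hstep : ∀ n : ℕ, ∀ᵐ x ∂m,
        R.opR α (fun y => w y * fn n y) x = w x * R.opR α (fn n) x := by
      intro n
      have hopRfn : Measurable fun x => R.opR α (fn n) x :=
        R.measurable_opR hα (hfnmeas n) (hfn0 n)
      have hGon : ∀ s, MeasurableSet s → m s < ∞ →
          IntegrableOn (fun x => w x * R.opR α (fn n) x) s m := by
        intro s hs hsfin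
        haveI : IsFiniteMeasure (m.restrict s) := ⟨by rwa [Measure.restrict_apply_univ]⟩
        have hwmem : MemLp w p m := ⟨hwmeas.aestronglyMeasurable, hwp⟩
        have hw_int : Integrable w (m.restrict s) :=
          (hwmem.restrict s).integrable hpp'.one_le
        have hbd : ∀ᵐ x ∂(m.restrict s), ‖R.opR α (fn n) x‖ ≤ max (max Cf 0) 0 * α⁻¹ :=
          Filter.Eventually.of_forall fun x =>
            R.abs_opR_le hα (hfnmeas n) (hfn0 n) (hfnC n) x
        refine (hw_int.bdd_mul hopRfn.aestronglyMeasurable.restrict hbd).congr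
          (Filter.Eventually.of_forall fun x => mul_comm _ _)
      have hFon : ∀ s, MeasurableSet s → m s < ∞ →
          IntegrableOn (fun x => R.opR α (fun y => w y * fn n y) x) s m := by
        intro s hs hsfin
        have hind : MemLp (s.indicator (fun _ => (1:ℝ))) p' m :=
          memLp_indicator_const p' hs 1 (Or.inr hsfin.ne)
        have hindmeas : Measurable (s.indicator (fun _ => (1:ℝ))) :=
          measurable_const.indicator hs
        have hind0 : ∀ x, 0 ≤ s.indicator (fun _ => (1:ℝ)) x :=
          fun x => Set.indicator_nonneg (fun _ _ => zero_le_one) x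
        have hind1 : ∀ x, s.indicator (fun _ => (1:ℝ)) x ≤ 1 := by
          intro x
          by_cases hx : x ∈ s
          · rw [Set.indicator_of_mem hx]
          · rw [Set.indicator_of_notMem hx]; exact zero_le_one
        obtain ⟨hint, _⟩ := R.pairing S hmR hD hpp' hwmeas hwp (hfnmeas n) (hfn0 n) (hfnC n)
          hindmeas hind0 hind1 hind.2 hα
        have hIndInt : Integrable
            (s.indicator (fun x => R.opR α (fun y => w y * fn n y) x)) m := by
          refine hint.congr (Filter.Eventually.of_forall fun x => ?_)
          by_cases hx : x ∈ s
          · simp [Set.indicator_of_mem hx]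
          · simp [Set.indicator_of_notMem hx]
        exact (integrable_indicator_iff hs).mp hIndInt
      have heq : ∀ s, MeasurableSet s → m s < ∞ →
          ∫ x in s, R.opR α (fun y => w y * fn n y) x ∂m
            = ∫ x in s, w x * R.opR α (fn n) x ∂m := by
        intro s hs hsfin
        have hind : MemLp (s.indicator (fun _ => (1:ℝ))) p' m :=
          memLp_indicator_const p' hs 1 (Or.inr hsfin.ne)
        have hindmeas : Measurable (s.indicator (fun _ => (1:ℝ))) :=
          measurable_const.indicator hs
        have hind0 : ∀ x, 0 ≤ s.indicator (fun _ => (1:ℝ)) x :=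
          fun x => Set.indicator_nonneg (fun _ _ => zero_le_one) x
        have hind1 : ∀ x, s.indicator (fun _ => (1:ℝ)) x ≤ 1 := by
          intro x
          by_cases hx : x ∈ s
          · rw [Set.indicator_of_mem hx]
          · rw [Set.indicator_of_notMem hx]; exact zero_le_one
        obtain ⟨_, hPeq⟩ := R.pairing S hmR hD hpp' hwmeas hwp (hfnmeas n) (hfn0 n) (hfnC n)
          hindmeas hind0 hind1 hind.2 hα
        have hIntn := hInt α hα (fn n) (s.indicator (fun _ => (1:ℝ))) (hfnmeas n) hindmeas
          (hfn0 n) hind0 ⟨max Cf 0, hfnC n⟩ ⟨1, hind1⟩ (hfnLp n) hind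
        calc ∫ x in s, R.opR α (fun y => w y * fn n y) x ∂m
            = ∫ x, s.indicator (fun _ => (1:ℝ)) x * R.opR α (fun y => w y * fn n y) x ∂m := by
              rw [← integral_indicator hs]
              refine integral_congr_ae (Filter.Eventually.of_forall fun x => ?_)
              by_cases hx : x ∈ s
              · simp [Set.indicator_of_mem hx]
              · simp [Set.indicator_of_notMem hx]
          _ = ∫ x, (w x * fn n x) * S.opR α (s.indicator (fun _ => (1:ℝ))) x ∂m := hPeq
          _ = ∫ x, fn n x * u x * S.opR α (s.indicator (fun _ => (1:ℝ))) x ∂m := by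
              refine integral_congr_ae ?_
              filter_upwards [hwae] with x hx
              rw [hx]; ring
          _ = ∫ x, s.indicator (fun _ => (1:ℝ)) x * u x * R.opR α (fn n) x ∂m := hIntn
          _ = ∫ x, s.indicator (fun _ => (1:ℝ)) x * (w x * R.opR α (fn n) x) ∂m := by
              refine integral_congr_ae ?_
              filter_upwards [hwae] with x hx
              rw [hx]; ring
          _ = ∫ x in s, w x * R.opR α (fn n) x ∂m := by
              rw [← integral_indicator hs]
              refine integral_congr_ae (Filter.Eventually.of_forall fun x => ?_)
              by_cases hx : x ∈ s
              · simp [Set.indicator_of_mem hx]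
              · simp [Set.indicator_of_notMem hx]
      exact ae_eq_of_forall_setIntegral_eq_of_sigmaFinite hFon hGon heq
    obtain ⟨hWfin, _⟩ := R.pairing_fin hmR hpp' hwmeas hwp (g := fun _ => (0:ℝ))
      measurable_const (fun _ => le_rfl) (Cg := 0) (fun _ => le_rfl)
      (by rw [eLpNorm_zero']; exact ENNReal.zero_lt_top) hα
    have hall := ae_all_iff.mpr hstep
    filter_upwards [hall, hWfin] with x hx hWx
    have htendsto_fn : ∀ y, Tendsto (fun k => fn k y) atTop (nhds (f y)) := by
      intro y
      have hy : y ∈ ⋃ k, spanningSets m k := by rw [iUnion_spanningSets]; trivial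
      obtain ⟨n₀, hn₀⟩ := mem_iUnion.mp hy
      refine tendsto_const_nhds.congr' ?_
      refine (eventually_atTop.mpr ⟨n₀, fun k hk => ?_⟩)
      show f y = (spanningSets m k).indicator f y
      rw [Set.indicator_of_mem (monotone_spanningSets m hk hn₀)]
    haveI : IsFiniteMeasure (R.kernel α x) := R.isFiniteMeasure_kernel hα x
    have hlim1 : Tendsto (fun k => R.opR α (fn k) x) atTop (nhds (R.opR α f x)) := by
      refine tendsto_integral_of_dominated_convergence (fun _ => max Cf 0)
        (fun k => (hfnmeas k).aestronglyMeasurable) (integrable_const _)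
        (fun k => Filter.Eventually.of_forall fun y => ?_)
        (Filter.Eventually.of_forall fun y => htendsto_fn y)
      rw [Real.norm_eq_abs, abs_of_nonneg (hfn0 k y)]
      exact hfnC k y
    have hDom : Integrable (fun y => max Cf 0 * |w y|) (R.kernel α x) := by
      refine ⟨(hwmeas.abs.const_mul _).aestronglyMeasurable, ?_⟩
      show (∫⁻ y, (‖max Cf 0 * |w y|‖₊ : ℝ≥0∞) ∂(R.kernel α x)) < ⊤
      have he : ∀ y, (‖max Cf 0 * |w y|‖₊ : ℝ≥0∞)
          = ENNReal.ofReal (max Cf 0) * (‖w y‖₊ : ℝ≥0∞) := by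
        intro y
        rw [← enorm_eq_nnnorm, ← enorm_eq_nnnorm, Real.enorm_eq_ofReal (mul_nonneg (le_max_right Cf 0) (abs_nonneg _)),
          ENNReal.ofReal_mul (le_max_right Cf 0), Real.enorm_eq_ofReal_abs]
      rw [lintegral_congr he, lintegral_const_mul _ hwmeas.nnnorm.coe_nnreal_ennreal]
      exact ENNReal.mul_lt_top ENNReal.ofReal_lt_top hWx
    have hlim2 : Tendsto (fun k => R.opR α (fun y => w y * fn k y) x) atTop
        (nhds (R.opR α (fun y => w y * f y) x)) := by
      refine tendsto_integral_of_dominated_convergence (fun y => max Cf 0 * |w y|)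
        (fun k => (hwmeas.mul (hfnmeas k)).aestronglyMeasurable) hDom
        (fun k => Filter.Eventually.of_forall fun y => ?_)
        (Filter.Eventually.of_forall fun y => (htendsto_fn y).const_mul (w y))
      show ‖w y * fn k y‖ ≤ max Cf 0 * |w y|
      rw [Real.norm_eq_abs, abs_mul, mul_comm (max Cf 0) _]
      refine mul_le_mul_of_nonneg_left ?_ (abs_nonneg _)
      rw [abs_of_nonneg (hfn0 k y)]
      exact hfnC k y
    have hlim3 : Tendsto (fun k => w x * R.opR α (fn k) x) atTop
        (nhds (w x * R.opR α f x)) := hlim1.const_mul (w x)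
    exact tendsto_nhds_unique (hlim2.congr fun k => hx k) hlim3

end SubMarkovResolvent

/-- `u ∈ L^p(E,m)` is `U`-invariant iff it is `U*`-invariant, and iff
`∫ f u U*_α g dm = ∫ g u U_α f dm` for all bounded positive measurable `f, g ∈ L^{p'}(E,m)`
and all `α > 0`. -/
theorem invariant_iff_dual_invariant {E : Type*} [MeasurableSpace E]
    (R S : SubMarkovResolvent E) (m : MeasureTheory.Measure E) [MeasureTheory.SigmaFinite m]
    (hm : R.SubInvariant m) (hD : R.InDuality S m)
    (p p' : ℝ≥0∞) (hp : 1 ≤ p) (hpp' : p⁻¹ + p'⁻¹ = 1)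
    (u : E → ℝ) (hu : MeasureTheory.MemLp u p m) :
    (R.Invariant m u ↔ S.Invariant m u) ∧
    (R.Invariant m u ↔
      ∀ α : ℝ, 0 < α → ∀ f g : E → ℝ, Measurable f → Measurable g →
        (∀ x, 0 ≤ f x) → (∀ x, 0 ≤ g x) → (∃ C : ℝ, ∀ x, f x ≤ C) → (∃ C : ℝ, ∀ x, g x ≤ C) →
        MeasureTheory.MemLp f p' m → MeasureTheory.MemLp g p' m →
        ∫ x, f x * u x * S.opR α g x ∂m = ∫ x, g x * u x * R.opR α f x ∂m) := by
  have hpp'c : p.IsConjExponent p' := ⟨hpp'⟩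
  have hmS : S.SubInvariant m := R.dual_subInvariant S hD
  have hD' : S.InDuality R m := R.dual_inDuality S hD
  have hiffR := R.master S m hm hD hpp'c hu
  have hiffS := S.master R m hmS hD' hpp'c hu
  have hswap : (∀ α : ℝ, 0 < α → ∀ f g : E → ℝ, Measurable f → Measurable g →
        (∀ x, 0 ≤ f x) → (∀ x, 0 ≤ g x) → (∃ C : ℝ, ∀ x, f x ≤ C) → (∃ C : ℝ, ∀ x, g x ≤ C) →
        MeasureTheory.MemLp f p' m → MeasureTheory.MemLp g p' m →
        ∫ x, f x * u x * S.opR α g x ∂m = ∫ x, g x * u x * R.opR α f x ∂m) ↔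
      (∀ α : ℝ, 0 < α → ∀ f g : E → ℝ, Measurable f → Measurable g →
        (∀ x, 0 ≤ f x) → (∀ x, 0 ≤ g x) → (∃ C : ℝ, ∀ x, f x ≤ C) → (∃ C : ℝ, ∀ x, g x ≤ C) →
        MeasureTheory.MemLp f p' m → MeasureTheory.MemLp g p' m →
        ∫ x, f x * u x * R.opR α g x ∂m = ∫ x, g x * u x * S.opR α f x ∂m) := by
    constructor
    · intro h α hα f g hf hg hf0 hg0 hCf hCg hfp hgp
      exact (h α hα g f hg hf hg0 hf0 hCg hCf hgp hfp).symm
    · intro h α hα f g hf hg hf0 hg0 hCf hCg hfp hgp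
      exact (h α hα g f hg hf hg0 hf0 hCg hCf hgp hfp).symm
  exact ⟨hiffR.trans (hswap.trans hiffS.symm), hiffR⟩
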